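/- For all integers m, n ≥ 0 and every integer c: if there exists i ≥ 0 with 2·T(i,m,n) − mn = c, then there exists j ≥ 0 with 2·T(j,m,n) − mn = −c. -/

import Mathlib

/-- The Thue–Morse word `t = 01101001⋯`: `t_i` is the number of 1's in the binary
expansion of `i`, reduced modulo 2. -/
def tm (i : ℕ) : ℕ := (Nat.digits 2 i).count 1 % 2

/-- `T(i,m,n) = ∑_{k<m} ∑_{ℓ<n} t_{i+k+ℓ}`, the number of 1's in the `m × n` word
rectangle whose `(k,ℓ)` entry is `t_{i+k+ℓ}`. -/
def tmT (i m n : ℕ) : ℕ :=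
  ∑ k ∈ Finset.range m, ∑ l ∈ Finset.range n, tm (i + k + l)

lemma tm_le_one (x : ℕ) : tm x ≤ 1 := Nat.lt_succ_iff.mp (Nat.mod_lt _ (by norm_num))

lemma tm_add_pow (x N : ℕ) (hx : x < 2 ^ N) : tm (x + 2 ^ N) = 1 - tm x := by
  have hlen : (Nat.digits 2 x).length ≤ N := by
    rcases Nat.eq_zero_or_pos x with rfl | hx0
    · simp
    · rw [Nat.digits_len 2 x (by norm_num) hx0.ne']
      have := (Nat.log_lt_iff_lt_pow (by norm_num : 1 < 2) hx0.ne').mpr hx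
      omega
  have h := Nat.digits_append_zeroes_append_digits (b := 2) (k := N - (Nat.digits 2 x).length)
    (m := 1) (n := x) (by norm_num) (by norm_num)
  rw [Nat.add_sub_cancel' hlen, mul_one] at h
  have hcount : (Nat.digits 2 (x + 2 ^ N)).count 1 = (Nat.digits 2 x).count 1 + 1 := by
    rw [← h]
    simp [List.count_append, List.count_replicate]
  unfold tm
  rw [hcount]
  have := Nat.mod_two_eq_zero_or_one ((Nat.digits 2 x).count 1)
  omega

theorem tm_rectangle_symmetry (m n : ℕ) (c : ℤ)
    (h : ∃ i : ℕ, 2 * (tmT i m n : ℤ) - (m : ℤ) * (n : ℤ) = c) :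
    ∃ j : ℕ, 2 * (tmT j m n : ℤ) - (m : ℤ) * (n : ℤ) = -c := by
  obtain ⟨i, hi⟩ := h
  set N := i + m + n with hNdef
  refine ⟨i + 2 ^ N, ?_⟩
  have hT : (tmT (i + 2 ^ N) m n : ℤ) = (m : ℤ) * n - tmT i m n := by
    unfold tmT
    push_cast
    have key : ∀ k ∈ Finset.range m, ∀ l ∈ Finset.range n,
        (tm (i + 2 ^ N + k + l) : ℤ) = 1 - (tm (i + k + l) : ℤ) := by
      intro k hk l hl
      simp only [Finset.mem_range] at hk hl
      have hx : i + k + l < 2 ^ N := lt_of_lt_of_le (by omega) (Nat.le_of_lt (Nat.lt_two_pow_self (n := N)))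
      have heq : i + 2 ^ N + k + l = (i + k + l) + 2 ^ N := by ring
      rw [heq, tm_add_pow _ _ hx, Nat.cast_sub (tm_le_one _)]
      norm_num
    rw [Finset.sum_congr rfl (fun k hk => Finset.sum_congr rfl (fun l hl => key k hk l hl))]
    simp [Finset.sum_sub_distrib, mul_comm]
  rw [hT]; linarith
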